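/- Let R be a real (or complex) m × 3 matrix and let u₁² ≥ u₂² ≥ u₃² be the eigenvalues of R†R. Then for all unit vectors B, B' ∈ ℝᵐ (resp. the complex unit sphere), unit vectors a, a' ∈ ℝ³, the quantity ⟨B, R(a + a')⟩ + ⟨B', R(a − a')⟩ is at most 2√(u₁² + u₂²). -/

import Mathlib

set_option maxHeartbeats 1000000

open Matrix

lemma dp_self_nonneg {n : ℕ} (v : Fin n → ℝ) : 0 ≤ v ⬝ᵥ v :=
  Finset.sum_nonneg fun i _ => mul_self_nonneg (v i)

lemma dp_cs {n : ℕ} (v w : Fin n → ℝ) : (v ⬝ᵥ w)^2 ≤ (v ⬝ᵥ v) * (w ⬝ᵥ w) := by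
  have := Finset.sum_mul_sq_le_sq_mul_sq Finset.univ v w
  simpa [dotProduct, sq] using this

theorem stmt_2 {m : ℕ} (R : Matrix (Fin m) (Fin 3) ℝ) (u : Fin 3 → ℝ)
    (e : Fin 3 → Fin 3 → ℝ)
    (horth : ∀ i j, e i ⬝ᵥ e j = if i = j then (1 : ℝ) else 0)
    (heig : ∀ i, (Rᵀ * R).mulVec (e i) = u i • e i)
    (hu01 : u 1 ≤ u 0) (hu12 : u 2 ≤ u 1)
    (B B' : Fin m → ℝ) (hB : B ⬝ᵥ B = 1) (hB' : B' ⬝ᵥ B' = 1)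
    (a a' : Fin 3 → ℝ) (ha : a ⬝ᵥ a = 1) (ha' : a' ⬝ᵥ a' = 1) :
    B ⬝ᵥ R.mulVec (a + a') + B' ⬝ᵥ R.mulVec (a - a') ≤
      2 * Real.sqrt (u 0 + u 1) := by
  -- completeness of the orthonormal system e
  set E : Matrix (Fin 3) (Fin 3) ℝ := Matrix.of e with hEdef
  have hE : E * Eᵀ = 1 := by
    ext i j
    have := horth i j
    simpa [Matrix.mul_apply, Matrix.one_apply, dotProduct, hEdef] using this
  have hE' : Eᵀ * E = 1 := mul_eq_one_comm.mp hE
  have hcomplete : ∀ v w : Fin 3 → ℝ, ∑ i, (v ⬝ᵥ e i) * (w ⬝ᵥ e i) = v ⬝ᵥ w := by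
    intro v w
    have h1 : ∀ z : Fin 3 → ℝ, E.mulVec z = fun i => z ⬝ᵥ e i := by
      intro z; funext i
      simp [Matrix.mulVec, dotProduct, hEdef, mul_comm]
    calc ∑ i, (v ⬝ᵥ e i) * (w ⬝ᵥ e i) = E.mulVec v ⬝ᵥ E.mulVec w := by
          rw [h1 v, h1 w]; rfl
      _ = vecMul v Eᵀ ⬝ᵥ E.mulVec w := by rw [Matrix.vecMul_transpose]
      _ = v ⬝ᵥ Eᵀ.mulVec (E.mulVec w) := (Matrix.dotProduct_mulVec _ _ _).symm
      _ = v ⬝ᵥ (Eᵀ * E).mulVec w := by rw [Matrix.mulVec_mulVec]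
      _ = v ⬝ᵥ w := by rw [hE', Matrix.one_mulVec]
  -- ‖Rv‖² in eigen-coordinates
  have hsym : ∀ v w : Fin 3 → ℝ, (Rᵀ * R).mulVec v ⬝ᵥ w = v ⬝ᵥ (Rᵀ * R).mulVec w := by
    intro v w
    rw [Matrix.dotProduct_mulVec, ← Matrix.vecMul_transpose, Matrix.transpose_mul,
      Matrix.transpose_transpose]
  have hRv : ∀ v : Fin 3 → ℝ, R.mulVec v ⬝ᵥ R.mulVec v = v ⬝ᵥ (Rᵀ * R).mulVec v := by
    intro v
    rw [← Matrix.mulVec_mulVec]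
    conv_rhs => rw [Matrix.dotProduct_mulVec, Matrix.vecMul_transpose]
  have hS : ∀ v : Fin 3 → ℝ, R.mulVec v ⬝ᵥ R.mulVec v = ∑ i, u i * (v ⬝ᵥ e i)^2 := by
    intro v
    rw [hRv, ← hcomplete v ((Rᵀ * R).mulVec v)]
    refine Finset.sum_congr rfl fun i _ => ?_
    have h2 : (Rᵀ * R).mulVec v ⬝ᵥ e i = u i * (v ⬝ᵥ e i) := by
      rw [hsym, heig, dotProduct_smul, smul_eq_mul]
    rw [h2]; ring
  -- eigenvalues are nonneg
  have hunn : ∀ i, 0 ≤ u i := by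
    intro i
    have h0 := hS (e i)
    have h1 : ∀ j, u j * (e i ⬝ᵥ e j)^2 = if i = j then u j else 0 := by
      intro j; rw [horth i j]; split <;> simp
    rw [Finset.sum_congr rfl fun j _ => h1 j, Finset.sum_ite_eq Finset.univ i u] at h0
    simp at h0
    rw [← h0]
    exact dp_self_nonneg _
  -- Cauchy-Schwarz step
  have hCS : ∀ (C : Fin m → ℝ), C ⬝ᵥ C = 1 → ∀ v : Fin 3 → ℝ,
      C ⬝ᵥ R.mulVec v ≤ Real.sqrt (R.mulVec v ⬝ᵥ R.mulVec v) := by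
    intro C hC v
    have h1 : (C ⬝ᵥ R.mulVec v)^2 ≤ R.mulVec v ⬝ᵥ R.mulVec v := by
      have := dp_cs C (R.mulVec v)
      rwa [hC, one_mul] at this
    calc C ⬝ᵥ R.mulVec v ≤ |C ⬝ᵥ R.mulVec v| := le_abs_self _
      _ = Real.sqrt ((C ⬝ᵥ R.mulVec v)^2) := (Real.sqrt_sq_eq_abs _).symm
      _ ≤ _ := Real.sqrt_le_sqrt h1
  set x : Fin 3 → ℝ := a + a' with hx
  set y : Fin 3 → ℝ := a - a' with hy
  set p : ℝ := x ⬝ᵥ x with hp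
  set q : ℝ := y ⬝ᵥ y with hq
  have haa' : a' ⬝ᵥ a = a ⬝ᵥ a' := dotProduct_comm a' a
  have hxy : x ⬝ᵥ y = 0 := by
    simp only [hx, hy, dotProduct_add, add_dotProduct,
      dotProduct_sub, sub_dotProduct, ha, ha', haa']
    ring
  have hpq4 : p + q = 4 := by
    simp only [hp, hq, hx, hy, dotProduct_add, add_dotProduct,
      dotProduct_sub, sub_dotProduct, ha, ha', haa']
    ring
  have hp0 : 0 ≤ p := dp_self_nonneg x
  have hq0 : 0 ≤ q := dp_self_nonneg y
  set Sx : ℝ := R.mulVec x ⬝ᵥ R.mulVec x with hSx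
  set Sy : ℝ := R.mulVec y ⬝ᵥ R.mulVec y with hSy
  have hSx0 : 0 ≤ Sx := dp_self_nonneg _
  have hSy0 : 0 ≤ Sy := dp_self_nonneg _
  have hsum3 : ∀ f : Fin 3 → ℝ, ∑ i, f i = f 0 + f 1 + f 2 := fun f => by
    simp [Fin.sum_univ_three]
  have hcx : ∑ i, (x ⬝ᵥ e i)^2 = p := by
    rw [hp, ← hcomplete x x]
    exact Finset.sum_congr rfl fun i _ => pow_two _
  have hcy : ∑ i, (y ⬝ᵥ e i)^2 = q := by
    rw [hq, ← hcomplete y y]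
    exact Finset.sum_congr rfl fun i _ => pow_two _
  -- bound Sx ≤ u 0 * p, Sy ≤ u 0 * q
  have hu20 : 0 ≤ u 2 := hunn 2
  have hu10 : 0 ≤ u 1 := hunn 1
  have hu00 : 0 ≤ u 0 := hunn 0
  have hSxle : Sx ≤ u 0 * p := by
    rw [hSx, hS x, ← hcx, Finset.mul_sum]
    refine Finset.sum_le_sum fun i _ => ?_
    have : u i ≤ u 0 := by fin_cases i <;> simp <;> linarith
    nlinarith [sq_nonneg (x ⬝ᵥ e i)]
  have hSyle : Sy ≤ u 0 * q := by
    rw [hSy, hS y, ← hcy, Finset.mul_sum]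
    refine Finset.sum_le_sum fun i _ => ?_
    have : u i ≤ u 0 := by fin_cases i <;> simp <;> linarith
    nlinarith [sq_nonneg (y ⬝ᵥ e i)]
  have hu01sum : 0 ≤ u 0 + u 1 := by linarith
  -- main chain
  have hmain : B ⬝ᵥ R.mulVec x + B' ⬝ᵥ R.mulVec y ≤ Real.sqrt Sx + Real.sqrt Sy :=
    add_le_add (hCS B hB x) (hCS B' hB' y)
  have hgoal : Real.sqrt Sx + Real.sqrt Sy ≤ 2 * Real.sqrt (u 0 + u 1) := by
    rcases eq_or_lt_of_le hp0 with hpz | hppos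
    · -- p = 0 : Sx = 0
      have hSxz : Sx = 0 := le_antisymm (by rw [← hpz] at hSxle; linarith) hSx0
      have : Sy ≤ (2 * Real.sqrt (u 0 + u 1))^2 := by
        have h4 : q = 4 := by linarith
        have : Sy ≤ 4 * (u 0 + u 1) := by rw [h4] at hSyle; nlinarith
        calc Sy ≤ 4 * (u 0 + u 1) := this
          _ = (2 * Real.sqrt (u 0 + u 1))^2 := by
            rw [mul_pow, Real.sq_sqrt hu01sum]; ring
      rw [hSxz, Real.sqrt_zero, zero_add]
      calc Real.sqrt Sy ≤ Real.sqrt ((2 * Real.sqrt (u 0 + u 1))^2) := Real.sqrt_le_sqrt this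
        _ = 2 * Real.sqrt (u 0 + u 1) := by
          rw [Real.sqrt_sq (by positivity)]
    rcases eq_or_lt_of_le hq0 with hqz | hqpos
    · -- q = 0 : Sy = 0
      have hSyz : Sy = 0 := le_antisymm (by rw [← hqz] at hSyle; linarith) hSy0
      have : Sx ≤ (2 * Real.sqrt (u 0 + u 1))^2 := by
        have h4 : p = 4 := by linarith
        have : Sx ≤ 4 * (u 0 + u 1) := by rw [h4] at hSxle; nlinarith
        calc Sx ≤ 4 * (u 0 + u 1) := this
          _ = (2 * Real.sqrt (u 0 + u 1))^2 := by
            rw [mul_pow, Real.sq_sqrt hu01sum]; ring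
      rw [hSyz, Real.sqrt_zero, add_zero]
      calc Real.sqrt Sx ≤ Real.sqrt ((2 * Real.sqrt (u 0 + u 1))^2) := Real.sqrt_le_sqrt this
        _ = 2 * Real.sqrt (u 0 + u 1) := by
          rw [Real.sqrt_sq (by positivity)]
    -- main case: p, q > 0
    -- Bessel: q * (x⬝eᵢ)² + p * (y⬝eᵢ)² ≤ p*q
    have hbessel : ∀ i, q * (x ⬝ᵥ e i)^2 + p * (y ⬝ᵥ e i)^2 ≤ p * q := by
      intro i
      set ci : ℝ := x ⬝ᵥ e i with hci
      set di : ℝ := y ⬝ᵥ e i with hdi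
      set w : Fin 3 → ℝ := (p*q) • e i - (q*ci) • x - (p*di) • y with hw
      have hww : 0 ≤ w ⬝ᵥ w := dp_self_nonneg w
      have hee : e i ⬝ᵥ e i = 1 := by rw [horth i i]; simp
      have hex : e i ⬝ᵥ x = ci := dotProduct_comm (e i) x
      have hey : e i ⬝ᵥ y = di := dotProduct_comm (e i) y
      have hxe : x ⬝ᵥ e i = ci := rfl
      have hye : y ⬝ᵥ e i = di := rfl
      have hyx : y ⬝ᵥ x = 0 := by rw [dotProduct_comm]; exact hxy
      have hexp : w ⬝ᵥ w = p*q*(p*q - (q*ci^2 + p*di^2)) := by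
        simp only [hw, dotProduct_sub, sub_dotProduct,
          dotProduct_smul, smul_dotProduct, smul_eq_mul,
          hee, hex, hey, hxe, hye, hxy, hyx, ← hp, ← hq]
        ring
      rw [hexp] at hww
      nlinarith [mul_pos hppos hqpos]
    -- key inequality: q*Sx + p*Sy ≤ p*q*(u0+u1)
    have hkey : q * Sx + p * Sy ≤ p * q * (u 0 + u 1) := by
      have hqSx : q * Sx = ∑ i, u i * (q * (x ⬝ᵥ e i)^2) := by
        rw [hSx, hS x, Finset.mul_sum]; refine Finset.sum_congr rfl fun i _ => by ring
      have hpSy : p * Sy = ∑ i, u i * (p * (y ⬝ᵥ e i)^2) := by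
        rw [hSy, hS y, Finset.mul_sum]; refine Finset.sum_congr rfl fun i _ => by ring
      set t : Fin 3 → ℝ := fun i => q * (x ⬝ᵥ e i)^2 + p * (y ⬝ᵥ e i)^2 with ht
      have hsumt : t 0 + t 1 + t 2 = 2 * (p*q) := by
        have h1 : ∑ i, q * (x ⬝ᵥ e i)^2 = q * p := by rw [← Finset.mul_sum, hcx]
        have h2 : ∑ i, p * (y ⬝ᵥ e i)^2 = p * q := by rw [← Finset.mul_sum, hcy]
        have : ∑ i, t i = q*p + p*q := by
          rw [ht]; rw [Finset.sum_add_distrib, h1, h2]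
        rw [hsum3] at this; linarith
      have hcomb : q * Sx + p * Sy = u 0 * t 0 + u 1 * t 1 + u 2 * t 2 := by
        rw [hqSx, hpSy, ← Finset.sum_add_distrib]
        rw [show (∑ i, (u i * (q * (x ⬝ᵥ e i)^2) + u i * (p * (y ⬝ᵥ e i)^2))) = ∑ i, u i * t i by
          refine Finset.sum_congr rfl fun i _ => by rw [ht]; ring]
        rw [hsum3]
      have ht0 : t 0 ≤ p * q := hbessel 0
      have ht2nn : 0 ≤ t 2 := by
        rw [ht]; positivity
      rw [hcomb]
      have h1 : u 2 * t 2 ≤ u 1 * t 2 := mul_le_mul_of_nonneg_right hu12 ht2nn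
      have h2 : (u 0 - u 1) * t 0 ≤ (u 0 - u 1) * (p*q) :=
        mul_le_mul_of_nonneg_left ht0 (sub_nonneg.mpr hu01)
      have h3 : u 1 * (t 0 + t 1 + t 2) = u 1 * (2*(p*q)) := by rw [hsumt]
      linarith
    -- finish with Cauchy-Schwarz in θ
    set A : ℝ := Real.sqrt Sx with hA
    set Bb : ℝ := Real.sqrt Sy with hBb
    set s : ℝ := Real.sqrt (u 0 + u 1) with hs
    have hA2 : A^2 = Sx := Real.sq_sqrt hSx0
    have hB2 : Bb^2 = Sy := Real.sq_sqrt hSy0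
    have hs2 : s^2 = u 0 + u 1 := Real.sq_sqrt hu01sum
    have hAnn : 0 ≤ A := Real.sqrt_nonneg _
    have hBnn : 0 ≤ Bb := Real.sqrt_nonneg _
    have hsnn : 0 ≤ s := Real.sqrt_nonneg _
    have hkey' : q * A^2 + p * Bb^2 ≤ p * q * s^2 := by rw [hA2, hB2, hs2]; exact hkey
    have hpqpos : 0 < p*q := mul_pos hppos hqpos
    have hsq : (A + Bb)^2 ≤ (2*s)^2 := by
      have hgm : 2*(A*Bb)*(p*q) ≤ A^2*q^2 + Bb^2*p^2 := by
        nlinarith [sq_nonneg (A*q - Bb*p)]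
      have h1 : (p+q)*(q*A^2 + p*Bb^2) ≤ 4*(p*q*s^2) := by
        rw [hpq4]; linarith
      have h2 : p*q*(A+Bb)^2 ≤ (p+q)*(q*A^2 + p*Bb^2) := by ring_nf; ring_nf at hgm; linarith
      have h3 : p*q*(A+Bb)^2 ≤ p*q*(2*s)^2 := by ring_nf; ring_nf at h1 h2; linarith
      exact le_of_mul_le_mul_left (by linarith) hpqpos
    exact (abs_le_of_sq_le_sq' hsq (by linarith)).2
  calc B ⬝ᵥ R.mulVec (a + a') + B' ⬝ᵥ R.mulVec (a - a')
      = B ⬝ᵥ R.mulVec x + B' ⬝ᵥ R.mulVec y := rfl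
    _ ≤ Real.sqrt Sx + Real.sqrt Sy := hmain
    _ ≤ 2 * Real.sqrt (u 0 + u 1) := hgoal
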